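/- arXiv:0811.0802 — 2 statements merged into one kernel-verified Lean document; each statement's English description precedes it below -/
import Mathlib

section
/- Closed-form expression for the leave-p-out risk estimator of a projection estimator: with contrast γ(t,x) = ‖t‖₂² − 2t(x) and projection estimator ŝ_m^{ē} = (1/(n-p)) ∑_{j ∈ ē} ∑_{λ ∈ Λ(m)} φ_λ(X_j) φ_λ computed from the training indices ē, the Lpo estimator R̂_p(m) = binomial(n,p)^{-1} ∑_{e ∈ E_p} [‖ŝ_m^{ē}‖₂² − (2/p) ∑_{i ∈ e} ŝ_m^{ē}(X_i)] equals (1/(n(n-p))) ∑_{λ ∈ Λ(m)} [∑_{j=1}^n φ_λ(X_j)² − ((n-p+1)/(n-1)) ∑_{j ≠ k} φ_λ(X_j) φ_λ(X_k)]. -/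
open MeasureTheory intervalIntegral
open scoped Classical

section LpoAux
open Finset
set_option linter.unusedSectionVars false
section helpers
variable {α : Type*} [Fintype α] [DecidableEq α]
variable {α : Type*} [Fintype α] [DecidableEq α]

lemma count_notmem (p : ℕ) (j : α) :
    ((powersetCard p (univ : Finset α)).filter (fun e => j ∉ e)).card
      = (Fintype.card α - 1).choose p := by
  have h : (powersetCard p (univ : Finset α)).filter (fun e => j ∉ e)
      = powersetCard p ({j}ᶜ : Finset α) := by
    ext e
    simp only [mem_filter, mem_powersetCard, subset_univ, true_and,
      subset_compl_singleton]
    tauto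
  rw [h, card_powersetCard, card_compl, card_singleton]

lemma pair_subset (e : Finset α) (j k : α) :
    e ⊆ ({j, k} : Finset α)ᶜ ↔ j ∉ e ∧ k ∉ e := by
  constructor
  · intro hs
    constructor
    · intro hj; have := hs hj; simp at this
    · intro hk; have := hs hk; simp at this
  · rintro ⟨hj, hk⟩ x hx
    simp only [mem_compl, mem_insert, mem_singleton]
    rintro (rfl | rfl) <;> [exact hj hx; exact hk hx]

lemma count_notmem2 (p : ℕ) (j k : α) (hjk : j ≠ k) :
    ((powersetCard p (univ : Finset α)).filter (fun e => j ∉ e ∧ k ∉ e)).card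
      = (Fintype.card α - 2).choose p := by
  have h : (powersetCard p (univ : Finset α)).filter (fun e => j ∉ e ∧ k ∉ e)
      = powersetCard p (({j, k} : Finset α)ᶜ) := by
    ext e
    simp only [mem_filter, mem_powersetCard, subset_univ, true_and, pair_subset]
    tauto
  rw [h, card_powersetCard, card_compl, card_insert_of_notMem (by simpa using hjk),
    card_singleton]

lemma count_mem_notmem (p : ℕ) (hp : 1 ≤ p) (i j : α) (hij : i ≠ j) :
    ((powersetCard p (univ : Finset α)).filter (fun e => i ∈ e ∧ j ∉ e)).card
      = (Fintype.card α - 2).choose (p - 1) := by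
  have h : ((powersetCard p (univ : Finset α)).filter (fun e => i ∈ e ∧ j ∉ e)).card
      = (powersetCard (p-1) (({i, j} : Finset α)ᶜ)).card := by
    refine Finset.card_bij' (fun e _ => e.erase i) (fun e _ => insert i e) ?_ ?_ ?_ ?_
    · intro e he
      simp only [mem_filter, mem_powersetCard, subset_univ, true_and] at he
      obtain ⟨hc, hi, hj⟩ := he
      simp only [mem_powersetCard, pair_subset, mem_erase]
      refine ⟨⟨fun h => h.1 rfl, fun h => hj h.2⟩, ?_⟩
      rw [card_erase_of_mem hi, hc]
    · intro e he
      simp only [mem_powersetCard, pair_subset] at he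
      obtain ⟨⟨hi', hj'⟩, hc⟩ := he
      simp only [mem_filter, mem_powersetCard, subset_univ, true_and]
      refine ⟨?_, by simp, ?_⟩
      · rw [card_insert_of_notMem hi', hc]; omega
      · simp only [mem_insert]
        rintro (rfl | hj)
        · exact hij rfl
        · exact hj' hj
    · intro e he
      simp only [mem_filter] at he
      exact insert_erase he.2.1
    · intro e he
      simp only [mem_powersetCard, pair_subset] at he
      exact erase_insert he.1.1
  rw [h, card_powersetCard, card_compl, card_insert_of_notMem (by simpa using hij),
    card_singleton]

lemma sum_compl_eq (e : Finset α) (g : α → ℝ) :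
    ∑ j ∈ eᶜ, g j = ∑ j, if j ∉ e then g j else 0 := by
  rw [← Finset.sum_filter]
  congr 1
  ext x; simp

lemma sum_mem_eq (e : Finset α) (g : α → ℝ) :
    ∑ j ∈ e, g j = ∑ j, if j ∈ e then g j else 0 := by
  rw [← Finset.sum_filter]
  congr 1
  ext x; simp

lemma sum_ite_card (P : Finset (Finset α)) (q : Finset α → Prop) [DecidablePred q] (c : ℝ) :
    ∑ e ∈ P, (if q e then c else 0) = ((P.filter q).card : ℝ) * c := by
  rw [← Finset.sum_filter, Finset.sum_const, nsmul_eq_mul]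

lemma sum_comm3 (P : Finset (Finset α)) (f : Finset α → α → α → ℝ) :
    ∑ e ∈ P, ∑ j, ∑ k, f e j k = ∑ j, ∑ k, ∑ e ∈ P, f e j k := by
  rw [Finset.sum_comm]
  exact Finset.sum_congr rfl fun j _ => Finset.sum_comm

lemma L_sq (p : ℕ) (a : α → ℝ) :
    ∑ e ∈ powersetCard p (univ : Finset α), (∑ j ∈ eᶜ, a j)^2
      = ((Fintype.card α - 1).choose p : ℝ) * ∑ j, a j^2
        + ((Fintype.card α - 2).choose p : ℝ) *
            ∑ j, ∑ k, if j ≠ k then a j * a k else 0 := by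
  have step1 : ∀ e : Finset α, (∑ j ∈ eᶜ, a j)^2
      = ∑ j, ∑ k, (if j ∉ e ∧ k ∉ e then a j * a k else 0) := by
    intro e
    rw [sum_compl_eq, sq, Finset.sum_mul_sum]
    refine Finset.sum_congr rfl fun j _ => Finset.sum_congr rfl fun k _ => ?_
    split_ifs <;> simp_all
  rw [Finset.sum_congr rfl fun e _ => step1 e, sum_comm3]
  have step2 : ∀ j k : α,
      (∑ e ∈ powersetCard p (univ : Finset α),
        if j ∉ e ∧ k ∉ e then a j * a k else 0)
      = if j = k then ((Fintype.card α - 1).choose p : ℝ) * (a j * a k)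
        else ((Fintype.card α - 2).choose p : ℝ) * (a j * a k) := by
    intro j k
    by_cases hjk : j = k
    · subst hjk
      rw [if_pos rfl]
      simp only [and_self]
      rw [sum_ite_card (q := fun e => j ∉ e), count_notmem p j]
    · rw [if_neg hjk, sum_ite_card (q := fun e => j ∉ e ∧ k ∉ e),
        count_notmem2 p j k hjk]
  rw [Finset.sum_congr rfl fun j _ => Finset.sum_congr rfl fun k _ => step2 j k]
  have step3 : ∀ j k : α,
      (if j = k then ((Fintype.card α - 1).choose p : ℝ) * (a j * a k)
        else ((Fintype.card α - 2).choose p : ℝ) * (a j * a k))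
      = (if j = k then ((Fintype.card α - 1).choose p : ℝ) * (a j * a k) else 0)
        + ((Fintype.card α - 2).choose p : ℝ) *
            (if j ≠ k then a j * a k else 0) := by
    intro j k
    split_ifs with h <;> simp_all
  rw [Finset.sum_congr rfl fun j _ => Finset.sum_congr rfl fun k _ => step3 j k]
  simp only [Finset.sum_add_distrib]
  congr 1
  · rw [Finset.mul_sum]
    refine Finset.sum_congr rfl fun j _ => ?_
    rw [Finset.sum_ite_eq univ j (fun k => ((Fintype.card α - 1).choose p : ℝ) * (a j * a k)),
      if_pos (mem_univ j)]
    ring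
  · rw [Finset.mul_sum]
    exact Finset.sum_congr rfl fun j _ => (Finset.mul_sum _ _ _).symm

lemma L_cross (p : ℕ) (hp : 1 ≤ p) (a : α → ℝ) :
    ∑ e ∈ powersetCard p (univ : Finset α), ∑ i ∈ e, ∑ j ∈ eᶜ, a j * a i
      = ((Fintype.card α - 2).choose (p - 1) : ℝ) *
          ∑ j, ∑ k, if j ≠ k then a j * a k else 0 := by
  have step1 : ∀ e : Finset α, (∑ i ∈ e, ∑ j ∈ eᶜ, a j * a i)
      = ∑ i, ∑ j, (if i ∈ e ∧ j ∉ e then a j * a i else 0) := by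
    intro e
    rw [sum_mem_eq]
    refine Finset.sum_congr rfl fun i _ => ?_
    by_cases hi : i ∈ e
    · simp only [hi, if_true, true_and, sum_compl_eq]
    · simp [hi]
  rw [Finset.sum_congr rfl fun e _ => step1 e, sum_comm3]
  have step2 : ∀ i j : α,
      (∑ e ∈ powersetCard p (univ : Finset α),
        if i ∈ e ∧ j ∉ e then a j * a i else 0)
      = if i ≠ j then ((Fintype.card α - 2).choose (p - 1) : ℝ) * (a j * a i)
        else 0 := by
    intro i j
    by_cases hij : i = j
    · subst hij
      rw [if_neg (by simp)]
      exact Finset.sum_eq_zero fun e _ => if_neg (fun h => h.2 h.1)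
    · rw [if_pos hij, sum_ite_card (q := fun e => i ∈ e ∧ j ∉ e),
        count_mem_notmem p hp i j hij]
  rw [Finset.sum_congr rfl fun i _ => Finset.sum_congr rfl fun j _ => step2 i j]
  rw [Finset.mul_sum]
  refine Finset.sum_congr rfl fun i _ => ?_
  rw [Finset.mul_sum]
  refine Finset.sum_congr rfl fun j _ => ?_
  split_ifs with h
  · ring
  · simp
end helpers

lemma ortho_sq {Λ : Type*} [Fintype Λ] (φ : Λ → ℝ → ℝ)
    (hint : ∀ l l' : Λ, IntervalIntegrable (fun t => φ l t * φ l' t) volume 0 1)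
    (horth : ∀ l l' : Λ,
      ∫ t in (0:ℝ)..1, φ l t * φ l' t = if l = l' then 1 else 0)
    (b : Λ → ℝ) :
    ∫ t in (0:ℝ)..1, (∑ l, b l * φ l t)^2 = ∑ l, (b l)^2 := by
  have expand : ∀ t : ℝ, (∑ l, b l * φ l t)^2
      = ∑ l, ∑ l', (b l * b l') * (φ l t * φ l' t) := by
    intro t
    rw [sq, Finset.sum_mul_sum]
    exact Finset.sum_congr rfl fun l _ => Finset.sum_congr rfl fun l' _ => by ring
  have key1 : ∀ l : Λ, IntervalIntegrable
      (fun x => ∑ l', (b l * b l') * (φ l x * φ l' x)) volume 0 1 := by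
    intro l
    have h := IntervalIntegrable.sum (μ := volume) (a := 0) (b := 1)
      (Finset.univ (α := Λ)) (f := fun l' x => (b l * b l') * (φ l x * φ l' x))
      (fun l' _ => ((hint l l').const_mul _))
    convert h using 1
    · rfl
    ext x
    simp
  calc ∫ t in (0:ℝ)..1, (∑ l, b l * φ l t)^2
      = ∫ t in (0:ℝ)..1, ∑ l, ∑ l', (b l * b l') * (φ l t * φ l' t) :=
        intervalIntegral.integral_congr (fun t _ => expand t)
    _ = ∑ l, ∫ t in (0:ℝ)..1, ∑ l', (b l * b l') * (φ l t * φ l' t) :=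
        intervalIntegral.integral_finset_sum (fun l _ => key1 l)
    _ = ∑ l, ∑ l', ∫ t in (0:ℝ)..1, (b l * b l') * (φ l t * φ l' t) :=
        Finset.sum_congr rfl fun l _ =>
          intervalIntegral.integral_finset_sum (fun l' _ => ((hint l l').const_mul _))
    _ = ∑ l, ∑ l', (b l * b l') * if l = l' then 1 else 0 :=
        Finset.sum_congr rfl fun l _ => Finset.sum_congr rfl fun l' _ => by
          rw [intervalIntegral.integral_const_mul, horth l l']
    _ = ∑ l, (b l)^2 := by
        simp [mul_ite, Finset.sum_ite_eq, sq]

set_option maxHeartbeats 1000000 in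
lemma coeff_id (n p : ℕ) (hn : 2 ≤ n) (hp1 : 1 ≤ p) (hp2 : p ≤ n - 1) (Q T : ℝ) :
    (n.choose p : ℝ)⁻¹ *
      ((1/((n:ℝ)-p))^2 * (((n-1).choose p : ℝ) * Q + ((n-2).choose p : ℝ) * T)
        - (2/(p:ℝ)) * ((1/((n:ℝ)-p)) * (((n-2).choose (p-1) : ℝ) * T)))
    = (1/((n:ℝ)*((n:ℝ)-p))) * (Q - (((n:ℝ)-p+1)/((n:ℝ)-1)) * T) := by
  obtain ⟨n', rfl⟩ : ∃ n', n = n' + 2 := ⟨n - 2, by omega⟩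
  obtain ⟨p', rfl⟩ : ∃ p', p = p' + 1 := ⟨p - 1, by omega⟩
  have hpn : p' ≤ n' := by omega
  have h1 : n' + 2 - 1 = n' + 1 := by omega
  have h2 : n' + 2 - 2 = n' := by omega
  have h3 : p' + 1 - 1 = p' := by omega
  rw [h1, h2, h3]
  have r1 : ((n':ℝ)+1) * (n'.choose p' : ℝ) = ((n'+1).choose (p'+1) : ℝ) * ((p':ℝ)+1) := by
    exact_mod_cast congrArg (Nat.cast (R := ℝ)) (Nat.add_one_mul_choose_eq n' p')
  have r2 : ((n':ℝ)+2) * ((n'+1).choose p' : ℝ) = ((n'+2).choose (p'+1) : ℝ) * ((p':ℝ)+1) := by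
    exact_mod_cast congrArg (Nat.cast (R := ℝ)) (Nat.add_one_mul_choose_eq (n'+1) p')
  have r3 : ((n'+1).choose (p'+1) : ℝ) = (n'.choose p' : ℝ) + (n'.choose (p'+1) : ℝ) := by
    exact_mod_cast congrArg (Nat.cast (R := ℝ)) (Nat.choose_succ_succ n' p')
  have r4 : ((n'+2).choose (p'+1) : ℝ) = ((n'+1).choose p' : ℝ) + ((n'+1).choose (p'+1) : ℝ) := by
    exact_mod_cast congrArg (Nat.cast (R := ℝ)) (Nat.choose_succ_succ (n'+1) p')
  have hB1 : ((n'+1).choose (p'+1) : ℝ) ≠ 0 := by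
    have := Nat.choose_pos (show p'+1 ≤ n'+1 by omega)
    positivity
  have hpn' : (p':ℝ) ≤ n' := by exact_mod_cast hpn
  have hd1 : ((n':ℝ)+1) - (p':ℝ) ≠ 0 := by nlinarith
  have hd2 : ((n':ℝ)+1) ≠ 0 := by positivity
  have hd3 : ((p':ℝ)+1) ≠ 0 := by positivity
  have hd4 : ((n':ℝ)+2) ≠ 0 := by positivity
  have hA2 : (n'.choose p' : ℝ) = ((n'+1).choose (p'+1) : ℝ) * ((p':ℝ)+1) / ((n':ℝ)+1) := by
    rw [eq_div_iff hd2]; linear_combination r1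
  have hB2 : (n'.choose (p'+1) : ℝ)
      = ((n'+1).choose (p'+1) : ℝ) * ((n':ℝ) - p') / ((n':ℝ)+1) := by
    rw [eq_div_iff hd2]; linear_combination -r1 - ((n':ℝ)+1) * r3
  have hN' : ((n'+2).choose (p'+1) : ℝ)
      = ((n'+1).choose (p'+1) : ℝ) * ((n':ℝ)+2) / (((n':ℝ)+1) - (p':ℝ)) := by
    rw [eq_div_iff hd1]; linear_combination r2 + ((n':ℝ)+2) * r4
  rw [hA2, hB2, hN']
  push_cast
  rw [show ((n':ℝ)+2) - ((p':ℝ)+1) = ((n':ℝ)+1) - p' by ring,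
    show ((n':ℝ)+2) - 1 = ((n':ℝ)+1) by ring]
  field_simp
  ring

end LpoAux

/-- Proposition 1: closed-form expression of the leave-p-out risk estimator for a
projection estimator associated with a finite orthonormal family `{φ_λ}` of
`L²([0,1])`. Here `ŝ_m^{ē}(t) = (1/(n-p)) ∑_{j ∈ ē} ∑_λ φ_λ(X_j) φ_λ(t)` and the
Lpo estimator `binom(n,p)⁻¹ ∑_e [‖ŝ_m^{ē}‖₂² − (2/p) ∑_{i ∈ e} ŝ_m^{ē}(X_i)]` equals
`(1/(n(n-p))) ∑_λ [∑_j φ_λ(X_j)² − ((n-p+1)/(n-1)) ∑_{j≠k} φ_λ(X_j)φ_λ(X_k)]`. -/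
theorem lpo_closed_form (n p : ℕ) (hn : 2 ≤ n) (hp1 : 1 ≤ p) (hp2 : p ≤ n - 1)
    (X : Fin n → ℝ) (hX : ∀ i, X i ∈ Set.Icc (0:ℝ) 1)
    (Λ : Type*) [Fintype Λ] (φ : Λ → ℝ → ℝ)
    (hint : ∀ l l' : Λ, IntervalIntegrable (fun t => φ l t * φ l' t) volume 0 1)
    (horth : ∀ l l' : Λ,
      ∫ t in (0:ℝ)..1, φ l t * φ l' t = if l = l' then 1 else 0) :
    (n.choose p : ℝ)⁻¹ *
      ∑ e ∈ Finset.powersetCard p (Finset.univ : Finset (Fin n)),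
        ((∫ t in (0:ℝ)..1,
            ((1 / ((n:ℝ) - p)) * ∑ j ∈ eᶜ, ∑ l, φ l (X j) * φ l t) ^ 2)
          - (2 / (p:ℝ)) * ∑ i ∈ e,
              (1 / ((n:ℝ) - p)) * ∑ j ∈ eᶜ, ∑ l, φ l (X j) * φ l (X i))
    = (1 / ((n:ℝ) * ((n:ℝ) - p))) *
        ∑ l, ((∑ j, φ l (X j) ^ 2)
          - (((n:ℝ) - p + 1) / ((n:ℝ) - 1)) *
              ∑ j, ∑ k, if j ≠ k then φ l (X j) * φ l (X k) else 0) := by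
  classical
  set c : ℝ := 1 / ((n:ℝ) - p) with hc
  set P := Finset.powersetCard p (Finset.univ : Finset (Fin n)) with hP
  set Q : Λ → ℝ := fun l => ∑ j, φ l (X j) ^ 2 with hQ
  set T : Λ → ℝ := fun l => ∑ j, ∑ k, if j ≠ k then φ l (X j) * φ l (X k) else 0 with hT
  -- Step 1: compute the integral for each e
  have hInt : ∀ e : Finset (Fin n),
      (∫ t in (0:ℝ)..1, (c * ∑ j ∈ eᶜ, ∑ l, φ l (X j) * φ l t) ^ 2)
      = ∑ l, (c * ∑ j ∈ eᶜ, φ l (X j))^2 := by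
    intro e
    have h1 : ∀ t : ℝ, c * ∑ j ∈ eᶜ, ∑ l, φ l (X j) * φ l t
        = ∑ l, (c * ∑ j ∈ eᶜ, φ l (X j)) * φ l t := by
      intro t
      rw [Finset.sum_comm, Finset.mul_sum]
      refine Finset.sum_congr rfl fun l _ => ?_
      rw [← Finset.sum_mul]; ring
    calc ∫ t in (0:ℝ)..1, (c * ∑ j ∈ eᶜ, ∑ l, φ l (X j) * φ l t) ^ 2
        = ∫ t in (0:ℝ)..1, (∑ l, (c * ∑ j ∈ eᶜ, φ l (X j)) * φ l t) ^ 2 :=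
          intervalIntegral.integral_congr (fun t _ => by rw [h1 t])
      _ = ∑ l, (c * ∑ j ∈ eᶜ, φ l (X j))^2 :=
          ortho_sq φ hint horth _
  -- Step 2: rearrange the cross term
  have hCross : ∀ e : Finset (Fin n),
      (2 / (p:ℝ)) * ∑ i ∈ e, c * ∑ j ∈ eᶜ, ∑ l, φ l (X j) * φ l (X i)
      = ∑ l, (2 / (p:ℝ)) * (c * ∑ i ∈ e, ∑ j ∈ eᶜ, φ l (X j) * φ l (X i)) := by
    intro e
    have h2 : ∑ i ∈ e, c * ∑ j ∈ eᶜ, ∑ l, φ l (X j) * φ l (X i)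
        = c * ∑ l, ∑ i ∈ e, ∑ j ∈ eᶜ, φ l (X j) * φ l (X i) := by
      rw [← Finset.mul_sum]
      congr 1
      rw [show (∑ i ∈ e, ∑ j ∈ eᶜ, ∑ l, φ l (X j) * φ l (X i))
          = ∑ i ∈ e, ∑ l, ∑ j ∈ eᶜ, φ l (X j) * φ l (X i) from
        Finset.sum_congr rfl fun i _ => Finset.sum_comm]
      exact Finset.sum_comm
    rw [h2, Finset.mul_sum, Finset.mul_sum]
  -- per-l sums over e
  have hL1 : ∀ l : Λ, ∑ e ∈ P, (c * ∑ j ∈ eᶜ, φ l (X j))^2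
      = c^2 * (((n - 1).choose p : ℝ) * Q l + ((n - 2).choose p : ℝ) * T l) := by
    intro l
    calc ∑ e ∈ P, (c * ∑ j ∈ eᶜ, φ l (X j))^2
        = ∑ e ∈ P, c^2 * (∑ j ∈ eᶜ, φ l (X j))^2 :=
          Finset.sum_congr rfl fun e _ => by rw [mul_pow]
      _ = c^2 * ∑ e ∈ P, (∑ j ∈ eᶜ, φ l (X j))^2 := (Finset.mul_sum _ _ _).symm
      _ = c^2 * (((n - 1).choose p : ℝ) * Q l + ((n - 2).choose p : ℝ) * T l) := by
          rw [hP, L_sq p (fun j => φ l (X j))]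
          simp [Fintype.card_fin, hQ, hT]
  have hL2 : ∀ l : Λ, ∑ e ∈ P, (2 / (p:ℝ)) * (c * ∑ i ∈ e, ∑ j ∈ eᶜ, φ l (X j) * φ l (X i))
      = (2 / (p:ℝ)) * (c * (((n - 2).choose (p-1) : ℝ) * T l)) := by
    intro l
    rw [← Finset.mul_sum, ← Finset.mul_sum]
    rw [hP, L_cross p hp1 (fun j => φ l (X j))]
    simp [Fintype.card_fin, hT]
  calc (n.choose p : ℝ)⁻¹ *
      ∑ e ∈ P, ((∫ t in (0:ℝ)..1, (c * ∑ j ∈ eᶜ, ∑ l, φ l (X j) * φ l t) ^ 2)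
        - (2 / (p:ℝ)) * ∑ i ∈ e, c * ∑ j ∈ eᶜ, ∑ l, φ l (X j) * φ l (X i))
      = (n.choose p : ℝ)⁻¹ * ∑ e ∈ P, ∑ l,
          ((c * ∑ j ∈ eᶜ, φ l (X j))^2
            - (2 / (p:ℝ)) * (c * ∑ i ∈ e, ∑ j ∈ eᶜ, φ l (X j) * φ l (X i))) := by
        congr 1
        refine Finset.sum_congr rfl fun e _ => ?_
        rw [hInt e, hCross e, ← Finset.sum_sub_distrib]
    _ = (n.choose p : ℝ)⁻¹ * ∑ l, ∑ e ∈ P,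
          ((c * ∑ j ∈ eᶜ, φ l (X j))^2
            - (2 / (p:ℝ)) * (c * ∑ i ∈ e, ∑ j ∈ eᶜ, φ l (X j) * φ l (X i))) := by
        rw [Finset.sum_comm]
    _ = (n.choose p : ℝ)⁻¹ * ∑ l,
          (c^2 * (((n - 1).choose p : ℝ) * Q l + ((n - 2).choose p : ℝ) * T l)
            - (2 / (p:ℝ)) * (c * (((n - 2).choose (p-1) : ℝ) * T l))) := by
        congr 1
        refine Finset.sum_congr rfl fun l _ => ?_
        rw [Finset.sum_sub_distrib, hL1 l, hL2 l]
    _ = ∑ l, (n.choose p : ℝ)⁻¹ *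
          (c^2 * (((n - 1).choose p : ℝ) * Q l + ((n - 2).choose p : ℝ) * T l)
            - (2 / (p:ℝ)) * (c * (((n - 2).choose (p-1) : ℝ) * T l))) :=
        Finset.mul_sum _ _ _
    _ = ∑ l, (1 / ((n:ℝ) * ((n:ℝ) - p))) *
          (Q l - (((n:ℝ) - p + 1) / ((n:ℝ) - 1)) * T l) := by
        refine Finset.sum_congr rfl fun l _ => ?_
        rw [hc]
        exact coeff_id n p hn hp1 hp2 (Q l) (T l)
    _ = (1 / ((n:ℝ) * ((n:ℝ) - p))) *
          ∑ l, (Q l - (((n:ℝ) - p + 1) / ((n:ℝ) - 1)) * T l) :=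
        (Finset.mul_sum _ _ _).symm
end

section
/- Bias of the leave-p-out estimator is nonnegative and given by B[R̂_p(m)] := E[R̂_p(m)] − r_n(m) = (p/(n(n-p))) ∑_{λ ∈ Λ(m)} Var[φ_λ(X)] ≥ 0, where r_n(m) = E[‖ŝ_m‖₂² − 2∫_{[0,1]} s·ŝ_m] = (1/n) ∑_λ Var[φ_λ(X)] − ∑_λ (E φ_λ(X))². -/
open MeasureTheory ProbabilityTheory
open scoped Classical

lemma integrable_of_bdd' {Ω : Type*} [MeasurableSpace Ω] (μ : Measure Ω) [IsFiniteMeasure μ]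
    {f : Ω → ℝ} (hf : Measurable f) (C : ℝ) (hC : ∀ ω, |f ω| ≤ C) : Integrable f μ :=
  (integrable_const C).mono' hf.aestronglyMeasurable
    (Filter.Eventually.of_forall fun ω => by simpa using hC ω)

/-- Corollary 2: the bias of the leave-p-out risk estimator is
`B[R̂_p(m)] = E[R̂_p(m)] − r_n(m) = (p/(n(n-p))) ∑_λ Var[φ_λ(X)] ≥ 0`, where
`r_n(m) = (1/n) ∑_λ Var[φ_λ(X)] − ∑_λ (Eφ_λ(X))²` is the risk (up to a constant)
of the projection estimator. -/
theorem lpo_bias_nonneg (n p : ℕ) (hn : 2 ≤ n) (hp1 : 1 ≤ p) (hp2 : p ≤ n - 1)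
    {Ω : Type*} [MeasurableSpace Ω] (μ : Measure Ω) [IsProbabilityMeasure μ]
    (X : Fin n → Ω → ℝ) (hmeas : ∀ i, Measurable (X i))
    (hindep : iIndepFun X μ)
    (P : Measure ℝ) (hP : ∀ i, μ.map (X i) = P)
    (Λ : Type*) [Fintype Λ] (φ : Λ → ℝ → ℝ)
    (hφm : ∀ l, Measurable (φ l)) (hφb : ∀ l, ∃ C, ∀ x, |φ l x| ≤ C) :
    (∫ ω, (1 / ((n:ℝ) * ((n:ℝ) - p))) *
          ∑ l, ((∑ j, φ l (X j ω) ^ 2)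
            - (((n:ℝ) - p + 1) / ((n:ℝ) - 1)) *
                ∑ j, ∑ k, if j ≠ k then φ l (X j ω) * φ l (X k ω) else 0) ∂μ)
        - ((1 / (n:ℝ)) *
              ∑ l, ((∫ x, φ l x ^ 2 ∂P) - (∫ x, φ l x ∂P) ^ 2)
            - ∑ l, (∫ x, φ l x ∂P) ^ 2)
      = ((p:ℝ) / ((n:ℝ) * ((n:ℝ) - p))) *
          ∑ l, ((∫ x, φ l x ^ 2 ∂P) - (∫ x, φ l x ∂P) ^ 2)
    ∧ 0 ≤ ((p:ℝ) / ((n:ℝ) * ((n:ℝ) - p))) *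
          ∑ l, ((∫ x, φ l x ^ 2 ∂P) - (∫ x, φ l x ∂P) ^ 2) := by
  classical
  -- basic numeric facts
  have hpn : p + 1 ≤ n := by omega
  have hpnR : (p:ℝ) + 1 ≤ (n:ℝ) := by exact_mod_cast hpn
  have hn0 : (0:ℝ) < (n:ℝ) := by positivity -- fix below
  have hn2 : (2:ℝ) ≤ (n:ℝ) := by exact_mod_cast hn
  have hn1 : (0:ℝ) < (n:ℝ) - 1 := by linarith
  have hnp0 : (0:ℝ) < (n:ℝ) - p := by linarith
  have hnpos : (0:ℝ) < (n:ℝ) := by linarith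
  haveI : IsProbabilityMeasure P := by
    rw [← hP ⟨0, by omega⟩]
    exact Measure.isProbabilityMeasure_map (hmeas _).aemeasurable
  choose C hC using hφb
  have hC0 : ∀ l, 0 ≤ C l := fun l => le_trans (abs_nonneg _) (hC l 0)
  set M : Λ → ℝ := fun l => ∫ x, φ l x ∂P with hM
  set V : Λ → ℝ := fun l => ∫ x, φ l x ^ 2 ∂P with hV
  -- integrability under P
  have hIP1 : ∀ l, Integrable (φ l) P := fun l =>
    integrable_of_bdd' P (hφm l) (C l) (hC l)
  have hIP2 : ∀ l, Integrable (fun x => φ l x ^ 2) P := fun l =>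
    integrable_of_bdd' P ((hφm l).pow_const 2) ((C l) ^ 2) (fun x => by
      rw [abs_pow, sq_abs, ← sq_abs]
      exact pow_le_pow_left₀ (abs_nonneg _) (hC l x) 2)
  -- nonnegativity of variances
  have hvar : ∀ l, 0 ≤ V l - (M l) ^ 2 := by
    intro l
    have h0 : 0 ≤ ∫ x, (φ l x - M l) ^ 2 ∂P :=
      integral_nonneg (fun x => sq_nonneg _)
    have hexp : ∫ x, (φ l x - M l) ^ 2 ∂P = V l - (M l) ^ 2 := by
      have : ∀ x, (φ l x - M l) ^ 2 = φ l x ^ 2 - (2 * M l) * φ l x + (M l) ^ 2 := by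
        intro x; ring
      simp_rw [this]
      rw [integral_add (show Integrable (fun x => φ l x ^ 2 - (2 * M l) * φ l x) P from
            (hIP2 l).sub ((hIP1 l).const_mul _)) (integrable_const _),
        integral_sub (hIP2 l) ((hIP1 l).const_mul _), integral_const_mul, integral_const]
      simp only [hM, hV, measure_univ, probReal_univ, ENNReal.toReal_one, smul_eq_mul, one_mul]
      ring
    linarith [hexp ▸ h0]
  -- integrability under μ
  have hI1 : ∀ l (j : Fin n), Integrable (fun ω => φ l (X j ω) ^ 2) μ := fun l j =>
    integrable_of_bdd' μ (((hφm l).comp (hmeas j)).pow_const 2) ((C l) ^ 2) (fun ω => by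
      rw [abs_pow, sq_abs, ← sq_abs]
      exact pow_le_pow_left₀ (abs_nonneg _) (hC l _) 2)
  have hI2 : ∀ l (j k : Fin n), Integrable (fun ω => φ l (X j ω) * φ l (X k ω)) μ :=
    fun l j k =>
    integrable_of_bdd' μ (((hφm l).comp (hmeas j)).mul ((hφm l).comp (hmeas k)))
      ((C l) ^ 2) (fun ω => by
        rw [abs_mul, sq]
        exact mul_le_mul (hC l _) (hC l _) (abs_nonneg _) (hC0 l))
  have hI2' : ∀ l (j k : Fin n),
      Integrable (fun ω => if j ≠ k then φ l (X j ω) * φ l (X k ω) else 0) μ := by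
    intro l j k
    by_cases h : j = k
    · simp [h]
    · simpa [h] using hI2 l j k
  -- integral identities
  have h1 : ∀ l (j : Fin n), ∫ ω, φ l (X j ω) ^ 2 ∂μ = V l := by
    intro l j
    show _ = ∫ x, φ l x ^ 2 ∂P
    rw [← hP j]
    exact (integral_map (hmeas j).aemeasurable
      (((hφm l).pow_const 2)).aestronglyMeasurable).symm
  have h2 : ∀ l (j : Fin n), ∫ ω, φ l (X j ω) ∂μ = M l := by
    intro l j
    show _ = ∫ x, φ l x ∂P
    rw [← hP j]
    exact (integral_map (hmeas j).aemeasurable (hφm l).aestronglyMeasurable).symm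
  have h3 : ∀ l (j k : Fin n), j ≠ k →
      ∫ ω, φ l (X j ω) * φ l (X k ω) ∂μ = M l * M l := by
    intro l j k hjk
    have hi : IndepFun (fun ω => φ l (X j ω)) (fun ω => φ l (X k ω)) μ :=
      (hindep.indepFun hjk).comp (hφm l) (hφm l)
    rw [hi.integral_fun_mul_eq_mul_integral ((hφm l).comp (hmeas j)).aestronglyMeasurable
      ((hφm l).comp (hmeas k)).aestronglyMeasurable, h2 l j, h2 l k]
  -- value of the double ite-sum integral
  have h4 : ∀ l (j k : Fin n),
      ∫ ω, (if j ≠ k then φ l (X j ω) * φ l (X k ω) else 0) ∂μ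
        = if j ≠ k then M l * M l else 0 := by
    intro l j k
    by_cases h : j = k
    · simp [h]
    · simp only [h, ne_eq, not_false_eq_true, if_true]
      exact h3 l j k h
  -- compute the big integral
  set c : ℝ := ((n:ℝ) - p + 1) / ((n:ℝ) - 1) with hc
  have key : (∫ ω, (1 / ((n:ℝ) * ((n:ℝ) - p))) *
          ∑ l, ((∑ j, φ l (X j ω) ^ 2)
            - c * ∑ j, ∑ k, if j ≠ k then φ l (X j ω) * φ l (X k ω) else 0) ∂μ)
      = (1 / ((n:ℝ) * ((n:ℝ) - p))) *
          ∑ l, ((n:ℝ) * V l - c * ((n:ℝ) * ((n:ℝ) - 1)) * (M l) ^ 2) := by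
    rw [integral_const_mul]
    congr 1
    rw [integral_finset_sum]
    · refine Finset.sum_congr rfl fun l _ => ?_
      rw [integral_sub (integrable_finset_sum _ fun j _ => hI1 l j)
          ((integrable_finset_sum _ fun j _ =>
            integrable_finset_sum _ fun k _ => hI2' l j k).const_mul c),
        integral_finset_sum _ (fun j _ => hI1 l j), integral_const_mul,
        integral_finset_sum _ (fun j _ =>
          integrable_finset_sum _ fun k _ => hI2' l j k)]
      have e1 : ∑ j : Fin n, ∫ ω, φ l (X j ω) ^ 2 ∂μ = (n:ℝ) * V l := by
        simp [h1 l, Finset.sum_const, mul_comm]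
      have e2 : ∑ j : Fin n, ∫ ω, (∑ k, if j ≠ k then φ l (X j ω) * φ l (X k ω) else 0) ∂μ
          = (n:ℝ) * ((n:ℝ) - 1) * (M l) ^ 2 := by
        have : ∀ j : Fin n,
            ∫ ω, (∑ k, if j ≠ k then φ l (X j ω) * φ l (X k ω) else 0) ∂μ
              = ((n:ℝ) - 1) * (M l) ^ 2 := by
          intro j
          rw [integral_finset_sum _ (fun k _ => hI2' l j k)]
          have : ∀ k : Fin n,
              ∫ ω, (if j ≠ k then φ l (X j ω) * φ l (X k ω) else 0) ∂μ
                = if j ≠ k then M l * M l else 0 := h4 l j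
          rw [Finset.sum_congr rfl fun k _ => this k]
          have : ∑ k : Fin n, (if j ≠ k then M l * M l else 0)
              = ∑ k : Fin n, (M l * M l - if j = k then M l * M l else 0) := by
            refine Finset.sum_congr rfl fun k _ => ?_
            by_cases h : j = k <;> simp [h]
          rw [this, Finset.sum_sub_distrib, Finset.sum_ite_eq]
          simp [Finset.sum_const, sq]
          ring
        rw [Finset.sum_congr rfl fun j _ => this j]
        simp [Finset.sum_const]
        ring
      rw [e1, e2]
      ring
    · intro l _
      exact ((integrable_finset_sum _ fun j _ => hI1 l j).sub
        ((integrable_finset_sum _ fun j _ =>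
          integrable_finset_sum _ fun k _ => hI2' l j k).const_mul c))
  constructor
  · rw [key, hc]
    have hne1 : (n:ℝ) ≠ 0 := ne_of_gt hnpos
    have hne2 : (n:ℝ) - 1 ≠ 0 := ne_of_gt hn1
    have hne3 : (n:ℝ) - p ≠ 0 := ne_of_gt hnp0
    simp only [hM, hV, Finset.sum_sub_distrib, ← Finset.mul_sum]
    field_simp
    ring
  · apply mul_nonneg
    · positivity
    · exact Finset.sum_nonneg fun l _ => hvar l
end
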